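/- Let ω be a modulus of continuity and f ∈ C^{m,ω}(I) for a compact interval I. There exists a constant C > 0 depending only on m and the C^{m,ω} seminorm of f such that for any set X ⊆ I of m+1 distinct points with Newton interpolation polynomial P = P(X;f), we have |f(x) − P(x)| ≤ C ω(diam X)(diam X)^m and |f'(x) − P'(x)| ≤ C ω(diam X)(diam X)^{m−1} for all x in [min X, max X]. -/

import Mathlib

open Set Polynomial

/-- Iterated derivative of `f` minus a polynomial, for orders up to the smoothness of `f`. -/
lemma iteratedDeriv_sub_poly (m : ℕ) (f : ℝ → ℝ) (hf : ContDiff ℝ (m : ℕ∞) f)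
    (p : Polynomial ℝ) :
    ∀ k ≤ m, iteratedDeriv k (fun t => f t - p.eval t) =
      fun t => iteratedDeriv k f t - (Polynomial.derivative^[k] p).eval t := by
  intro k
  induction k with
  | zero => intro _; simp [iteratedDeriv_zero]
  | succ n ih =>
    intro hk
    have hn : n ≤ m := by omega
    rw [iteratedDeriv_succ, ih hn]
    funext t
    have hdf : DifferentiableAt ℝ (iteratedDeriv n f) t := by
      have : Differentiable ℝ (iteratedDeriv n f) :=
        hf.differentiable_iteratedDeriv n (by exact_mod_cast (by omega : n < m))
      exact this.differentiableAt
    rw [deriv_fun_sub hdf ((Polynomial.derivative^[n] p).differentiable.differentiableAt)]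
    rw [iteratedDeriv_succ, Polynomial.deriv, Function.iterate_succ_apply']

/-- Finite Rolle: a function with `n+1` zeros on a finite set has `n` zeros of its
derivative, each strictly between two points of the original set. -/
lemma rolle_finset (g : ℝ → ℝ) (hg : Continuous g) :
    ∀ n : ℕ, ∀ S : Finset ℝ, S.card = n + 1 → (∀ s ∈ S, g s = 0) →
    ∃ T : Finset ℝ, T.card = n ∧
      ∀ t ∈ T, deriv g t = 0 ∧ (∃ a ∈ S, a < t) ∧ (∃ b ∈ S, t < b) := by
  intro n
  induction n with
  | zero => exact fun S _ _ => ⟨∅, rfl, by simp⟩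
  | succ n ih =>
    intro S hcard hzero
    have hS : S.Nonempty := Finset.card_pos.mp (by omega)
    set a := S.min' hS with ha
    have haS : a ∈ S := S.min'_mem hS
    set S' := S.erase a with hS'def
    have hcard' : S'.card = n + 1 := by
      rw [hS'def, Finset.card_erase_of_mem haS]; omega
    have hS' : S'.Nonempty := Finset.card_pos.mp (by omega)
    set b := S'.min' hS' with hb
    have hbS' : b ∈ S' := S'.min'_mem hS'
    have hbS : b ∈ S := Finset.mem_of_mem_erase hbS'
    have hab : a < b :=
      lt_of_le_of_ne (S.min'_le b hbS) (Ne.symm (Finset.ne_of_mem_erase hbS'))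
    obtain ⟨c, hc, hc0⟩ := exists_deriv_eq_zero hab hg.continuousOn
      (by rw [hzero a haS, hzero b hbS])
    obtain ⟨T', hT'card, hT'⟩ := ih S' hcard'
      (fun s hs => hzero s (Finset.mem_of_mem_erase hs))
    have hcT' : c ∉ T' := by
      intro hcm
      obtain ⟨_, ⟨a', ha'S', ha'⟩, _⟩ := hT' c hcm
      have h1 : b ≤ a' := S'.min'_le a' ha'S'
      have h2 : c < b := hc.2
      linarith
    refine ⟨insert c T', ?_, ?_⟩
    · rw [Finset.card_insert_of_notMem hcT', hT'card]
    · intro t ht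
      rcases Finset.mem_insert.mp ht with rfl | ht'
      · exact ⟨hc0, ⟨a, haS, hc.1⟩, ⟨b, hbS, hc.2⟩⟩
      · obtain ⟨h1, ⟨a', ha', h2⟩, ⟨b', hb', h3⟩⟩ := hT' t ht'
        exact ⟨h1, ⟨a', Finset.mem_of_mem_erase ha', h2⟩,
          ⟨b', Finset.mem_of_mem_erase hb', h3⟩⟩

/-- Interpolation estimate: for f ∈ C^{m,ω}(I), I = [A,B] compact, there is a constant
C > 0 (depending only on m and the C^{m,ω} seminorm of f) such that for any set
X = {x₀,…,x_m} ⊆ I of m+1 distinct points with min lo, max hi (so diam X = hi − lo),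
and P the interpolation polynomial of f on X (degree ≤ m, P(x_i) = f(x_i)),
|f(t) − P(t)| ≤ C ω(diam X)(diam X)^m and |f'(t) − P'(t)| ≤ C ω(diam X)(diam X)^{m−1}
for all t ∈ [min X, max X]. -/
theorem interpolation_estimate (m : ℕ) (hm : 1 ≤ m) (ω : ℝ → ℝ)
    (hcont : ContinuousOn ω (Set.Ici 0))
    (hmono : MonotoneOn ω (Set.Ici 0))
    (hconc : ConcaveOn ℝ (Set.Ici 0) ω)
    (h0 : ω 0 = 0)
    (A B : ℝ) (hAB : A ≤ B)
    (f : ℝ → ℝ) (M : ℝ) (hf : ContDiff ℝ (m : ℕ∞) f)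
    (hM : ∀ x y : ℝ, |iteratedDeriv m f x - iteratedDeriv m f y| ≤ M * ω |x - y|) :
    ∃ C > 0, ∀ (x : ℕ → ℝ) (lo hi : ℝ),
      (∀ i ≤ m, x i ∈ Set.Icc A B) →
      (∀ i ≤ m, ∀ j ≤ m, x i = x j → i = j) →
      (∀ i ≤ m, x i ∈ Set.Icc lo hi) →
      (∃ i ≤ m, x i = lo) → (∃ j ≤ m, x j = hi) →
      ∀ P : Polynomial ℝ, P.natDegree ≤ m → (∀ i ≤ m, P.eval (x i) = f (x i)) →
      ∀ t ∈ Set.Icc lo hi,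
        |f t - P.eval t| ≤ C * ω (hi - lo) * (hi - lo) ^ m ∧
        |deriv f t - (Polynomial.derivative P).eval t| ≤
          C * ω (hi - lo) * (hi - lo) ^ (m - 1) := by
  set K : ℝ := max M 0 with hK
  have hK0 : 0 ≤ K := le_max_right _ _
  refine ⟨K + 1, by linarith, ?_⟩
  intro x lo hi hXI hinj hXr hlo hhi P hPdeg hPval t ht
  set d : ℝ := hi - lo with hd
  obtain ⟨i0, hi0m, hxi0⟩ := hlo
  have hlohi : lo ≤ hi := by
    have := hXr i0 hi0m; rw [hxi0] at this; exact le_trans this.1 this.2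
  have hd0 : 0 ≤ d := by simp [hd]; linarith
  have hωd0 : 0 ≤ ω d := by
    have := hmono (le_refl (0:ℝ)) hd0 hd0
    rw [h0] at this; exact this
  set g : ℝ → ℝ := fun t => f t - P.eval t with hg
  have key : ∀ k ≤ m, iteratedDeriv k g =
      fun t => iteratedDeriv k f t - (Polynomial.derivative^[k] P).eval t :=
    iteratedDeriv_sub_poly m f hf P
  have hgdiff : ∀ k < m, Differentiable ℝ (iteratedDeriv k g) := by
    intro k hk
    rw [key k (le_of_lt hk)]
    exact (hf.differentiable_iteratedDeriv k (by exact_mod_cast hk)).sub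
      (Polynomial.derivative^[k] P).differentiable
  -- chain of zero sets
  have chain : ∀ k, k ≤ m → ∃ S : Finset ℝ, S.card = m + 1 - k ∧
      (∀ s ∈ S, iteratedDeriv k g s = 0) ∧ ∀ s ∈ S, s ∈ Set.Icc lo hi := by
    intro k
    induction k with
    | zero =>
      intro _
      refine ⟨(Finset.range (m + 1)).image x, ?_, ?_, ?_⟩
      · have hinjOn : Set.InjOn x (Finset.range (m + 1)) := by
          intro i hi' j hj' hij
          exact hinj i (Nat.lt_succ_iff.mp (Finset.mem_range.mp hi'))
            j (Nat.lt_succ_iff.mp (Finset.mem_range.mp hj')) hij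
        rw [Finset.card_image_of_injOn hinjOn, Finset.card_range]
        omega
      · intro s hs
        obtain ⟨i, hi', rfl⟩ := Finset.mem_image.mp hs
        have him : i ≤ m := Nat.lt_succ_iff.mp (Finset.mem_range.mp hi')
        simp [iteratedDeriv_zero, hg, hPval i him]
      · intro s hs
        obtain ⟨i, hi', rfl⟩ := Finset.mem_image.mp hs
        exact hXr i (Nat.lt_succ_iff.mp (Finset.mem_range.mp hi'))
    | succ k ih =>
      intro hk
      obtain ⟨S, hScard, hSz, hSmem⟩ := ih (by omega)
      have hkm : k < m := by omega
      have hcont' : Continuous (iteratedDeriv k g) := (hgdiff k hkm).continuous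
      obtain ⟨T, hTcard, hT⟩ := rolle_finset (iteratedDeriv k g) hcont' (m - k)
        S (by omega) hSz
      refine ⟨T, by omega, ?_, ?_⟩
      · intro s hs
        rw [iteratedDeriv_succ]
        exact (hT s hs).1
      · intro s hs
        obtain ⟨_, ⟨a, haS, ha⟩, ⟨b, hbS, hb⟩⟩ := hT s hs
        exact ⟨le_of_lt (lt_of_le_of_lt (hSmem a haS).1 ha),
          le_of_lt (lt_of_lt_of_le hb (hSmem b hbS).2)⟩
  -- downward bound
  have bound : ∀ j, j ≤ m → ∀ s ∈ Set.Icc lo hi,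
      |iteratedDeriv (m - j) g s| ≤ K * ω d * d ^ j := by
    intro j
    induction j with
    | zero =>
      intro _ s hs
      obtain ⟨Sm, hSmcard, hSmz, hSmmem⟩ := chain m le_rfl
      have hSmne : Sm.Nonempty := Finset.card_pos.mp (by omega)
      obtain ⟨ξ, hξ⟩ := hSmne
      have hξmem := hSmmem ξ hξ
      have hξz := hSmz ξ hξ
      have hdeg : (Polynomial.derivative^[m] P).natDegree = 0 := by
        have := P.natDegree_iterate_derivative m
        omega
      obtain ⟨c, hc⟩ : ∃ c, Polynomial.derivative^[m] P = Polynomial.C c :=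
        ⟨_, Polynomial.eq_C_of_natDegree_eq_zero hdeg⟩
      have hexp : iteratedDeriv m g s = iteratedDeriv m f s - iteratedDeriv m f ξ := by
        have h1 := congrFun (key m le_rfl) s
        have h2 := congrFun (key m le_rfl) ξ
        rw [hc] at h1 h2
        simp only [Polynomial.eval_C] at h1 h2
        rw [h2] at hξz
        rw [h1]; linarith
      have habs : |s - ξ| ≤ d := by
        rw [abs_sub_le_iff]
        constructor <;> [skip; skip] <;>
          · have h1 := hs.1; have h2 := hs.2
            have h3 := hξmem.1; have h4 := hξmem.2
            simp only [hd]; linarith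
      have hω : ω |s - ξ| ≤ ω d := hmono (abs_nonneg (s - ξ)) hd0 habs
      have hω0 : 0 ≤ ω |s - ξ| := by
        have := hmono (le_refl (0:ℝ)) (abs_nonneg (s - ξ)) (abs_nonneg _)
        rw [h0] at this; exact this
      calc |iteratedDeriv (m - 0) g s| = |iteratedDeriv m f s - iteratedDeriv m f ξ| := by
            rw [Nat.sub_zero, hexp]
        _ ≤ M * ω |s - ξ| := hM s ξ
        _ ≤ K * ω |s - ξ| := mul_le_mul_of_nonneg_right (le_max_left _ _) hω0
        _ ≤ K * ω d := mul_le_mul_of_nonneg_left hω hK0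
        _ = K * ω d * d ^ 0 := by ring
    | succ j ih =>
      intro hj s hs
      set k := m - (j + 1) with hkdef
      have hk1 : k + 1 = m - j := by omega
      have hkm : k < m := by omega
      obtain ⟨Sk, hSkcard, hSkz, hSkmem⟩ := chain k (by omega)
      have hSkne : Sk.Nonempty := Finset.card_pos.mp (by omega)
      obtain ⟨ξ, hξ⟩ := hSkne
      have hξmem := hSkmem ξ hξ
      have hξz := hSkz ξ hξ
      have hIcc : Convex ℝ (Set.Icc lo hi) := convex_Icc lo hi
      have hmvt := hIcc.norm_image_sub_le_of_norm_deriv_le (f := iteratedDeriv k g)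
        (C := K * ω d * d ^ j)
        (fun y _ => (hgdiff k hkm).differentiableAt)
        (fun y hy => by
          rw [Real.norm_eq_abs, ← iteratedDeriv_succ, hk1]
          exact ih (by omega) y hy)
        hξmem hs
      rw [hξz, sub_zero, Real.norm_eq_abs, Real.norm_eq_abs] at hmvt
      have habs : |s - ξ| ≤ d := by
        rw [abs_sub_le_iff]
        constructor <;>
          · have h1 := hs.1; have h2 := hs.2
            have h3 := hξmem.1; have h4 := hξmem.2
            simp only [hd]; linarith
      have hC0 : 0 ≤ K * ω d * d ^ j :=
        mul_nonneg (mul_nonneg hK0 hωd0) (pow_nonneg hd0 j)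
      calc |iteratedDeriv (m - (j + 1)) g s| ≤ K * ω d * d ^ j * |s - ξ| := hmvt
        _ ≤ K * ω d * d ^ j * d := mul_le_mul_of_nonneg_left habs hC0
        _ = K * ω d * d ^ (j + 1) := by ring
  have hrhs0 : 0 ≤ ω d * d ^ m := mul_nonneg hωd0 (pow_nonneg hd0 m)
  have hrhs1 : 0 ≤ ω d * d ^ (m - 1) := mul_nonneg hωd0 (pow_nonneg hd0 (m - 1))
  constructor
  · have h1 := bound m le_rfl t ht
    rw [Nat.sub_self, iteratedDeriv_zero] at h1
    calc |f t - P.eval t| = |g t| := rfl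
      _ ≤ K * ω d * d ^ m := h1
      _ ≤ (K + 1) * ω d * d ^ m := by nlinarith
  · have h1 := bound (m - 1) (by omega) t ht
    have hmm : m - (m - 1) = 1 := by omega
    rw [hmm] at h1
    have h2 : iteratedDeriv 1 g t = deriv f t - (Polynomial.derivative P).eval t := by
      have h3 := congrFun (key 1 hm) t
      simp only [Function.iterate_one] at h3
      rw [h3, show iteratedDeriv 1 f = deriv f from iteratedDeriv_one]
    rw [h2] at h1
    calc |deriv f t - (Polynomial.derivative P).eval t| ≤ K * ω d * d ^ (m - 1) := h1
      _ ≤ (K + 1) * ω d * d ^ (m - 1) := by nlinarith
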